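/- Assume ν_β is absolutely continuous with density h_β. For x∈I_β with h_β(x)>0, let m¹_x be the Borel probability measure on Σ determined on cylinders by m¹_x([a₁⋯a_n]) = (β/2)ⁿ h_β(T_{a₁⋯a_n}(x))/h_β(x). Then for ν_β-a.e. x the measure m¹_x is a probability measure supported on E_β(x), and the family (m¹_x) disintegrates m over ν_β: for every m-integrable f:Σ→ℝ, ∫_Σ f dm = ∫_{I_β} (∫ f dm¹_x) dν_β(x). Consequently m¹_x coincides ν_β-a.e. with the disintegration (m_x) of m by the fibres E_β(x). -/

import Mathlib

open MeasureTheory Filter Topology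
open scoped ENNReal Classical

noncomputable section

/-- The symbolic space `{0,1}^ℕ`. -/
abbrev Sig : Type := ℕ → Bool

/-- The metric `d(a,b) = 2^{-sup{n : a₁⋯a_n = b₁⋯b_n}}` on `Sig`. -/
noncomputable instance : MetricSpace Sig := PiNat.metricSpace

instance (priority := 2000) : MeasurableSpace Sig := borel Sig

instance : BorelSpace Sig := ⟨rfl⟩

/-- The cylinder set `[a₁⋯a_n]` determined by a word `w = a₁⋯a_n`. -/
def cyl (w : List Bool) : Set Sig := {b | ∀ i : Fin w.length, b i.1 = w.get i}

/-- `π_β(a) = Σ_{i=1}^∞ a_i β^{-i}`. -/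
def piBeta (β : ℝ) (a : Sig) : ℝ := ∑' i : ℕ, (if a i then (1 : ℝ) else 0) * (β ^ (i + 1))⁻¹

/-- `I_β = [0, 1/(β-1)]`. -/
def Ibeta (β : ℝ) : Set ℝ := Set.Icc 0 (β - 1)⁻¹

/-- The set `E_β(x) = π_β⁻¹(x)` of β-expansions of `x`. -/
def Ebeta (β : ℝ) (x : ℝ) : Set Sig := piBeta β ⁻¹' {x}

/-- `T_i(x) = βx - i` for `i = 0,1`. -/
def Tmap (β : ℝ) (b : Bool) (x : ℝ) : ℝ := β * x - (if b then 1 else 0)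

/-- `T_{a₁⋯a_n} = T_{a_n} ∘ ⋯ ∘ T_{a₁}`. -/
def Tword (β : ℝ) (w : List Bool) (x : ℝ) : ℝ := w.foldl (fun y b => Tmap β b y) x

/-- `s_β = log(2/β)/log 2`. -/
def sBeta (β : ℝ) : ℝ := Real.log (2 / β) / Real.log 2

/-- `m` is the uniform `(1/2,1/2)` Bernoulli measure: every cylinder of depth `n`
has measure `2^{-n}`. -/
def bernoulliCylProp (m : Measure Sig) : Prop :=
  ∀ w : List Bool, m (cyl w) = (2 : ℝ≥0∞)⁻¹ ^ w.length

/-- The disintegration property: `(mx x)` is a family of probability measures with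
`mx x` supported on `E_β(x)`, such that `∫ f dm = ∫∫ f d(mx x) dν_β(x)` for every
`m`-integrable `f`. -/
def IsDisintegration (β : ℝ) (m : Measure Sig) (mx : ℝ → Measure Sig) : Prop :=
  (∀ᵐ x ∂Measure.map (piBeta β) m,
      IsProbabilityMeasure (mx x) ∧ mx x (Ebeta β x)ᶜ = 0) ∧
  ∀ f : Sig → ℝ, Integrable f m →
    ∫ a, f a ∂m = ∫ x, (∫ a, f a ∂mx x) ∂Measure.map (piBeta β) m



lemma cyl_eq (w : List Bool) :
    cyl w = PiNat.cylinder (fun i => w.getD i false) w.length := by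
  ext b
  constructor
  · intro hb i hi
    have := hb ⟨i, hi⟩
    rw [List.get_eq_getElem] at this
    show b i = w.getD i false
    rw [List.getD_eq_getElem _ _ hi]
    exact this
  · intro hb i
    have : b i.1 = w.getD i.1 false := hb i.1 i.2
    rw [List.getD_eq_getElem _ _ i.2] at this
    rw [List.get_eq_getElem]
    exact this

lemma mem_cyl_iff {w : List Bool} {b : Sig} :
    b ∈ cyl w ↔ ∀ i < w.length, b i = w.getD i false := by
  rw [cyl_eq]; exact PiNat.mem_cylinder_iff

lemma cyl_nil : cyl [] = Set.univ := by
  rw [cyl_eq]; simp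

lemma isOpen_cyl (w : List Bool) : IsOpen (cyl w) := by
  rw [cyl_eq]; exact PiNat.isOpen_cylinder (E := fun _ => Bool) _ _

lemma measurableSet_cyl (w : List Bool) : MeasurableSet (cyl w) :=
  (isOpen_cyl w).measurableSet

/-- the word of length `n` extracted from a sequence -/
def pref (a : Sig) (n : ℕ) : List Bool := List.ofFn (fun i : Fin n => a i)

@[simp] lemma pref_length (a : Sig) (n : ℕ) : (pref a n).length = n := by
  simp [pref]

lemma pref_getD (a : Sig) {n i : ℕ} (hi : i < n) : (pref a n).getD i false = a i := by
  have : i < (pref a n).length := by simpa using hi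
  rw [List.getD_eq_getElem _ _ this]
  simp [pref]

lemma mem_cyl_pref (a : Sig) (n : ℕ) : a ∈ cyl (pref a n) := by
  rw [mem_cyl_iff]
  intro i hi
  rw [pref_getD a (by simpa using hi)]

lemma cyl_pref_subset {a : Sig} {s : Set Sig} (hs : IsOpen s) (ha : a ∈ s) :
    ∃ n, cyl (pref a n) ⊆ s := by
  obtain ⟨ε, εpos, hε⟩ := Metric.isOpen_iff.1 hs a ha
  obtain ⟨n, hn⟩ : ∃ n : ℕ, (1 / 2 : ℝ) ^ n < ε := exists_pow_lt_of_lt_one εpos (by norm_num)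
  refine ⟨n, fun b hb => hε ?_⟩
  rw [Metric.mem_ball]
  have : b ∈ PiNat.cylinder a n := by
    intro i hi
    rw [mem_cyl_iff] at hb
    rw [hb i (by simpa using hi), pref_getD a hi]
  exact lt_of_le_of_lt (PiNat.mem_cylinder_iff_dist_le.1 this) hn

lemma borel_eq_cyl :
    (inferInstance : MeasurableSpace Sig) = .generateFrom (Set.range cyl) := by
  apply le_antisymm
  · rw [show (inferInstance : MeasurableSpace Sig) = borel Sig from rfl, borel]
    apply MeasurableSpace.generateFrom_le
    intro s hs
    have : s = ⋃ w ∈ {w : List Bool | cyl w ⊆ s}, cyl w := by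
      apply Set.Subset.antisymm
      · intro a ha
        obtain ⟨n, hn⟩ := cyl_pref_subset hs ha
        exact Set.mem_biUnion hn (mem_cyl_pref a n)
      · exact Set.iUnion₂_subset fun w hw => hw
    rw [this]
    exact MeasurableSet.biUnion (Set.to_countable _)
      (fun w _ => MeasurableSpace.measurableSet_generateFrom ⟨w, rfl⟩)
  · apply MeasurableSpace.generateFrom_le
    rintro s ⟨w, rfl⟩
    exact measurableSet_cyl w

lemma isPiSystem_cyl : IsPiSystem (Set.range cyl) := by
  rintro s ⟨w, rfl⟩ t ⟨v, rfl⟩ hne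
  obtain ⟨b, hbw, hbv⟩ := hne
  rcases le_total w.length v.length with hle | hle
  · refine ⟨v, Eq.symm ?_⟩
    rw [Set.inter_eq_right]
    intro c hc
    rw [mem_cyl_iff] at *
    intro i hi
    rw [hc i (lt_of_lt_of_le hi hle), ← hbv i (lt_of_lt_of_le hi hle), hbw i hi]
  · refine ⟨w, Eq.symm ?_⟩
    rw [Set.inter_eq_left]
    intro c hc
    rw [mem_cyl_iff] at *
    intro i hi
    rw [hc i (lt_of_lt_of_le hi hle), ← hbw i (lt_of_lt_of_le hi hle), hbv i hi]

section beta

variable {β : ℝ} (hβ1 : 1 < β)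
include hβ1

lemma beta_pos : (0:ℝ) < β := lt_trans one_pos hβ1

lemma summable_geom_beta : Summable (fun i : ℕ => (β ^ (i+1))⁻¹) := by
  have h0 : (0:ℝ) < β := beta_pos hβ1
  have : Summable (fun i : ℕ => (β⁻¹) ^ i) :=
    summable_geometric_of_lt_one (by positivity) (by
      rw [inv_lt_one_iff₀]; right; exact hβ1)
  have := this.mul_left β⁻¹
  refine this.congr fun i => ?_
  rw [← inv_pow, pow_succ, mul_comm]

lemma summable_piBeta (a : Sig) :
    Summable (fun i : ℕ => (if a i then (1 : ℝ) else 0) * (β ^ (i + 1))⁻¹) := by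
  apply (summable_geom_beta hβ1).of_nonneg_of_le
  · intro i
    have : (0:ℝ) < β := beta_pos hβ1
    positivity
  · intro i
    have h1 : (0:ℝ) ≤ (β ^ (i+1))⁻¹ := by
      have : (0:ℝ) < β := beta_pos hβ1
      positivity
    rcases Bool.eq_false_or_eq_true (a i) with h | h <;> simp [h, h1]

omit hβ1 in
lemma sig_continuous_eval (i : ℕ) : Continuous (fun b : Sig => b i) := by
  have : ∀ v : Bool, IsOpen {b : Sig | b i = v} := by
    intro v
    rw [Metric.isOpen_iff]
    intro b hb
    refine ⟨(1/2)^i, by positivity, fun c hc => ?_⟩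
    rw [Metric.mem_ball] at hc
    have : c i = b i := PiNat.apply_eq_of_dist_lt hc le_rfl
    rw [Set.mem_setOf_eq, this]; exact hb
  rw [continuous_discrete_rng]
  intro v
  exact this v

lemma continuous_piBeta : Continuous (piBeta β) := by
  apply continuous_tsum
  · intro i
    exact (continuous_of_discreteTopology (f := fun v : Bool => (if v then (1:ℝ) else 0) * (β ^ (i + 1))⁻¹)).comp (sig_continuous_eval i)
  · exact summable_geom_beta hβ1
  · intro i a
    have hb0 : (0:ℝ) < β := beta_pos hβ1
    have h1 : (0:ℝ) < (β ^ (i+1))⁻¹ := by positivity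
    have habs : |β| = β := abs_of_pos hb0
    rcases Bool.eq_false_or_eq_true (a i) with h | h <;>
      simp [h, habs, abs_of_pos h1, h1.le]

lemma measurable_piBeta : Measurable (piBeta β) := (continuous_piBeta hβ1).measurable

end beta

/-- `cons b` prepends a digit -/
def consB (b : Bool) (a : Sig) : Sig := fun i => Nat.rec b (fun j _ => a j) i

@[simp] lemma consB_zero (b : Bool) (a : Sig) : consB b a 0 = b := rfl
@[simp] lemma consB_succ (b : Bool) (a : Sig) (i : ℕ) : consB b a (i+1) = a i := rfl

lemma piBeta_consB {β : ℝ} (hβ1 : 1 < β) (b : Bool) (a : Sig) :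
    piBeta β (consB b a) = (piBeta β a + (if b then (1:ℝ) else 0)) / β := by
  have hb0 : (0:ℝ) < β := beta_pos hβ1
  have hsum : Summable (fun i : ℕ => (if (consB b a) i then (1 : ℝ) else 0) * (β ^ (i + 1))⁻¹) :=
    summable_piBeta hβ1 _
  rw [piBeta, hsum.tsum_eq_zero_add]
  have : ∀ i : ℕ, (if (consB b a) (i+1) then (1 : ℝ) else 0) * (β ^ (i + 1 + 1))⁻¹
      = β⁻¹ * ((if a i then (1 : ℝ) else 0) * (β ^ (i + 1))⁻¹) := by
    intro i
    rw [consB_succ, show i + 1 + 1 = (i+1)+1 from rfl, pow_succ, mul_inv]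
    ring
  rw [tsum_congr this, tsum_mul_left]
  show (if b then (1:ℝ) else 0) * (β ^ (0+1))⁻¹ + β⁻¹ * piBeta β a = _
  rw [add_div, div_eq_mul_inv, div_eq_mul_inv]
  ring_nf

-- Tword facts
lemma Tword_nil (β : ℝ) (x : ℝ) : Tword β [] x = x := rfl

lemma Tword_cons (β : ℝ) (b : Bool) (w : List Bool) (x : ℝ) :
    Tword β (b :: w) x = Tword β w (Tmap β b x) := rfl

lemma Tword_append (β : ℝ) (w : List Bool) (b : Bool) (x : ℝ) :
    Tword β (w ++ [b]) x = Tmap β b (Tword β w x) := by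
  simp [Tword, List.foldl_append]

lemma Tword_affine (β : ℝ) (w : List Bool) :
    ∃ c : ℝ, ∀ x, Tword β w x = β ^ w.length * x - c := by
  induction w with
  | nil => exact ⟨0, by simp [Tword_nil]⟩
  | cons b w ih =>
    obtain ⟨c, hc⟩ := ih
    refine ⟨β ^ w.length * (if b then (1:ℝ) else 0) + c, fun x => ?_⟩
    rw [Tword_cons, hc, Tmap]
    simp only [List.length_cons]
    ring

lemma measurable_Tword (β : ℝ) (w : List Bool) : Measurable (Tword β w) := by
  obtain ⟨c, hc⟩ := Tword_affine β w
  have : Tword β w = fun x => β ^ w.length * x - c := funext hc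
  rw [this]
  fun_prop

lemma pref_succ (a : Sig) (n : ℕ) : pref a (n+1) = pref a n ++ [a n] := by
  rw [pref, List.ofFn_succ']
  simp [pref, List.concat_eq_append]

lemma Tword_pref {β : ℝ} (hβ0 : β ≠ 0) (a : Sig) (x : ℝ) (n : ℕ) :
    Tword β (pref a n) x
      = β ^ n * (x - ∑ i ∈ Finset.range n, (if a i then (1:ℝ) else 0) * (β ^ (i + 1))⁻¹) := by
  induction n with
  | zero => simp [pref, Tword_nil]
  | succ n ih =>
    rw [pref_succ, Tword_append, ih, Tmap, Finset.sum_range_succ]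
    field_simp
    ring

lemma piBeta_eq_of_forall_mem {β : ℝ} (hβ1 : 1 < β) {a : Sig} {x : ℝ}
    (H : ∀ n, Tword β (pref a n) x ∈ Set.Icc (0:ℝ) (β - 1)⁻¹) :
    piBeta β a = x := by
  have hb0 : (0:ℝ) < β := beta_pos hβ1
  set P : ℕ → ℝ := fun n => ∑ i ∈ Finset.range n, (if a i then (1:ℝ) else 0) * (β ^ (i + 1))⁻¹
  have hPtend : Tendsto P atTop (nhds (piBeta β a)) :=
    (summable_piBeta hβ1 a).hasSum.tendsto_sum_nat
  have hbound : ∀ n, |x - P n| ≤ (β - 1)⁻¹ * (β ^ n)⁻¹ := by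
    intro n
    have h := H n
    rw [Tword_pref (ne_of_gt hb0)] at h
    obtain ⟨h1, h2⟩ := h
    have hpow : (0:ℝ) < β ^ n := by positivity
    rw [abs_of_nonneg (nonneg_of_mul_nonneg_right h1 hpow)]
    · rw [← le_div_iff₀' hpow] at h2
      calc x - P n ≤ (β-1)⁻¹ / β ^ n := h2
      _ = (β - 1)⁻¹ * (β ^ n)⁻¹ := div_eq_mul_inv _ _
  have htend0 : Tendsto (fun n => x - P n) atTop (nhds 0) := by
    have : Tendsto (fun n : ℕ => (β - 1)⁻¹ * (β ^ n)⁻¹) atTop (nhds 0) := by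
      have h1 : Tendsto (fun n : ℕ => (β⁻¹) ^ n) atTop (nhds 0) :=
        tendsto_pow_atTop_nhds_zero_of_lt_one (by positivity) (by
          rw [inv_lt_one_iff₀]; right; exact hβ1)
      have : Tendsto (fun n : ℕ => (β ^ n)⁻¹) atTop (nhds 0) :=
        h1.congr (fun n => inv_pow β n)
      simpa using this.const_mul (β - 1)⁻¹
    apply squeeze_zero_norm hbound this
  have : Tendsto P atTop (nhds x) := by
    have := htend0.const_sub x
    simpa using this.congr (fun n => by ring)
  exact tendsto_nhds_unique hPtend this

-- Part 3 lemmas, to be appended before the theorem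
section meas

lemma measurable_to_sig {α : Type*} [MeasurableSpace α] {f : α → Sig}
    (hf : ∀ w, MeasurableSet (f ⁻¹' cyl w)) : Measurable f := by
  intro t ht
  have ht2 : MeasurableSet[MeasurableSpace.generateFrom (Set.range cyl)] t := by
    rw [← borel_eq_cyl]; exact ht
  exact measurable_generateFrom (by rintro s ⟨w, rfl⟩; exact hf w) ht2

lemma consB_preimage_cyl_nil (b : Bool) : consB b ⁻¹' cyl [] = Set.univ := by
  simp [cyl_nil]

lemma consB_preimage_cyl_cons (b c : Bool) (w : List Bool) :
    consB b ⁻¹' cyl (c :: w) = if b = c then cyl w else ∅ := by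
  by_cases hbc : b = c
  · subst hbc
    rw [if_pos rfl]
    ext a
    simp only [Set.mem_preimage, mem_cyl_iff, List.length_cons]
    constructor
    · intro ha i hi
      have := ha (i+1) (by omega)
      rwa [consB_succ, List.getD_cons_succ] at this
    · intro ha i hi
      match i with
      | 0 => simp [List.getD_cons_zero]
      | (j+1) =>
        rw [consB_succ, List.getD_cons_succ]
        exact ha j (by omega)
  · rw [if_neg hbc]
    ext a
    simp only [Set.mem_preimage, mem_cyl_iff, List.length_cons, Set.mem_empty_iff_false,
      iff_false]
    intro ha
    have := ha 0 (by omega)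
    rw [consB_zero, List.getD_cons_zero] at this
    exact hbc this

lemma measurable_consB (b : Bool) : Measurable (consB b) := by
  apply measurable_to_sig
  intro w
  match w with
  | [] => rw [consB_preimage_cyl_nil]; exact MeasurableSet.univ
  | (c :: w') =>
    rw [consB_preimage_cyl_cons]
    by_cases hbc : b = c
    · rw [if_pos hbc]; exact measurableSet_cyl w'
    · rw [if_neg hbc]; exact MeasurableSet.empty

lemma map_affine_volume {p : ℝ} (q : ℝ) (hp : p ≠ 0) :
    Measure.map (fun y => p * y + q) volume = ENNReal.ofReal |p⁻¹| • volume := by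
  have hcomp : (fun y : ℝ => p * y + q) = (fun y => y + q) ∘ (fun y => p * y) := rfl
  rw [hcomp, ← Measure.map_map (measurable_add_const q) (measurable_const_mul p),
    Real.map_volume_mul_left hp, Measure.map_smul, map_add_right_eq_self volume q]

lemma ae_comp_affine {p q : ℝ} (hp : p ≠ 0) {P : ℝ → Prop} (hP : ∀ᵐ x ∂(volume : Measure ℝ), P x) :
    ∀ᵐ y ∂(volume : Measure ℝ), P (p * y + q) := by
  have hS : volume {x | ¬ P x} = 0 := hP
  have hM : volume ((fun y => p * y + q) ⁻¹' (toMeasurable volume {x | ¬ P x})) = 0 := by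
    rw [← Measure.map_apply (by fun_prop) (measurableSet_toMeasurable _ _),
      map_affine_volume q hp]
    simp [measure_toMeasurable, hS]
  refine measure_mono_null (fun y hy => ?_) hM
  exact subset_toMeasurable _ _ hy

end meas

section herit

variable {β : ℝ} (hβ1 : 1 < β)
variable {m : Measure Sig} (hm : bernoulliCylProp m)
variable {h : ℝ → ℝ} (hmeas : Measurable h) (hnonneg : ∀ x, 0 ≤ h x)
variable (hdens : Measure.map (piBeta β) m
      = volume.withDensity fun x => ENNReal.ofReal (h x))

include hm in
lemma m_univ_one : m Set.univ = 1 := by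
  have := hm []
  rwa [cyl_nil, List.length_nil, pow_zero] at this

include hm in
lemma isProb_m : IsProbabilityMeasure m := ⟨m_univ_one hm⟩

include hβ1 hm hdens in
lemma lintegral_H_one : ∫⁻ x, ENNReal.ofReal (h x) ∂(volume : Measure ℝ) = 1 := by
  have h1 : Measure.map (piBeta β) m Set.univ = 1 := by
    rw [Measure.map_apply (measurable_piBeta hβ1) MeasurableSet.univ, Set.preimage_univ,
      m_univ_one hm]
  rw [hdens] at h1
  rwa [withDensity_apply _ MeasurableSet.univ, Measure.restrict_univ] at h1

include hmeas hnonneg hdens in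
lemma ae_h_pos : ∀ᵐ x ∂(Measure.map (piBeta β) m), 0 < h x := by
  rw [hdens, ae_iff]
  have hs : MeasurableSet {x : ℝ | ¬ 0 < h x} := by
    have : {x : ℝ | ¬ 0 < h x} = {x | h x ≤ 0} := by ext x; simp
    rw [this]
    exact measurableSet_le hmeas measurable_const
  rw [withDensity_apply _ hs]
  have : ∀ᵐ x ∂(volume.restrict {x : ℝ | ¬ 0 < h x}), ENNReal.ofReal (h x) = 0 := by
    rw [ae_restrict_iff' hs]
    apply ae_of_all
    intro x hx
    have : h x = 0 := le_antisymm (not_lt.1 hx) (hnonneg x)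
    simp [this]
  rw [lintegral_congr_ae this, lintegral_zero]

include hm in
omit hβ1 in
lemma m_split : m = (2:ℝ≥0∞)⁻¹ • Measure.map (consB false) m
    + (2:ℝ≥0∞)⁻¹ • Measure.map (consB true) m := by
  haveI := isProb_m hm
  apply ext_of_generate_finite (Set.range cyl) borel_eq_cyl isPiSystem_cyl
  · rintro s ⟨w, rfl⟩
    rw [Measure.add_apply, Measure.smul_apply, Measure.smul_apply,
      Measure.map_apply (measurable_consB false) (measurableSet_cyl w),
      Measure.map_apply (measurable_consB true) (measurableSet_cyl w)]
    match w with
    | [] =>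
      rw [consB_preimage_cyl_nil, consB_preimage_cyl_nil, hm [], m_univ_one hm]
      simp only [List.length_nil, pow_zero, smul_eq_mul, mul_one]
      exact ENNReal.inv_two_add_inv_two.symm
    | (c :: w') =>
      rw [consB_preimage_cyl_cons, consB_preimage_cyl_cons, hm (c :: w')]
      cases c
      · rw [if_pos rfl, if_neg (by simp)]
        rw [hm w']
        simp [pow_succ, mul_comm]
      · rw [if_neg (by simp), if_pos rfl]
        rw [hm w']
        simp [pow_succ, mul_comm]
  · rw [Measure.add_apply, Measure.smul_apply, Measure.smul_apply,
      Measure.map_apply (measurable_consB false) MeasurableSet.univ,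
      Measure.map_apply (measurable_consB true) MeasurableSet.univ]
    simp only [Set.preimage_univ, m_univ_one hm, smul_eq_mul, mul_one]
    exact ENNReal.inv_two_add_inv_two.symm

include hβ1 hm in
omit hmeas hnonneg hdens in
lemma nu_split : Measure.map (piBeta β) m
    = (2:ℝ≥0∞)⁻¹ • Measure.map (fun y => (y + (if (false:Bool) then (1:ℝ) else 0)) / β)
        (Measure.map (piBeta β) m)
    + (2:ℝ≥0∞)⁻¹ • Measure.map (fun y => (y + (if (true:Bool) then (1:ℝ) else 0)) / β)
        (Measure.map (piBeta β) m) := by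
  have hπ : Measurable (piBeta β) := measurable_piBeta hβ1
  have hg : ∀ c : ℝ, Measurable (fun y : ℝ => (y + c) / β) := by intro c; fun_prop
  have key : ∀ b : Bool, Measure.map (piBeta β) (Measure.map (consB b) m)
      = Measure.map (fun y => (y + (if b then (1:ℝ) else 0)) / β) (Measure.map (piBeta β) m) := by
    intro b
    rw [Measure.map_map hπ (measurable_consB b), Measure.map_map (hg _) hπ]
    congr 1
    funext a
    simp only [Function.comp_apply]
    rw [piBeta_consB hβ1]
  conv_lhs => rw [m_split hm]
  rw [Measure.map_add _ _ hπ, Measure.map_smul, Measure.map_smul, key false, key true]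

include hβ1 hm hmeas hnonneg hdens in
lemma ae_zero_Tmap (b : Bool) :
    ∀ᵐ y ∂(volume : Measure ℝ), h y = 0 → h (Tmap β b y) = 0 := by
  have hβ0 : β ≠ 0 := ne_of_gt (beta_pos hβ1)
  set v : ℝ := if b then (1:ℝ) else 0 with hv
  have hg : Measurable (fun y : ℝ => (y + v) / β) := by fun_prop
  set A : Set ℝ := {y | h y = 0} with hA
  have hAmeas : MeasurableSet A := hmeas (measurableSet_singleton 0)
  have hνA : Measure.map (piBeta β) m A = 0 := by
    rw [hdens, withDensity_apply _ hAmeas]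
    have : ∀ᵐ x ∂(volume.restrict A), ENNReal.ofReal (h x) = 0 := by
      rw [ae_restrict_iff' hAmeas]
      refine ae_of_all _ fun x hx => ?_
      have hx0 : h x = 0 := hx
      simp [hx0]
    rw [lintegral_congr_ae this, lintegral_zero]
  have hbzero : Measure.map (fun y => (y + v) / β) (Measure.map (piBeta β) m) A = 0 := by
    have hsplit := congrArg (fun μ : Measure ℝ => μ A) (nu_split hβ1 hm)
    simp only [Measure.add_apply, Measure.smul_apply, smul_eq_mul, hνA] at hsplit
    obtain ⟨h0, h1⟩ := add_eq_zero.1 hsplit.symm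
    have h2 : (2:ℝ≥0∞)⁻¹ ≠ 0 := by simp
    cases b
    · rcases mul_eq_zero.1 h0 with hc | hc
      · exact absurd hc h2
      · exact hc
    · rcases mul_eq_zero.1 h1 with hc | hc
      · exact absurd hc h2
      · exact hc
  have hpre : MeasurableSet ((fun y : ℝ => (y + v) / β) ⁻¹' A) := hg hAmeas
  rw [Measure.map_apply hg hAmeas, hdens, withDensity_apply _ hpre] at hbzero
  have hae0 : ∀ᵐ x ∂(volume : Measure ℝ), h ((x + v)/β) = 0 → h x = 0 := by
    have h1 : (fun x => ENNReal.ofReal (h x))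
        =ᵐ[volume.restrict ((fun y : ℝ => (y + v) / β) ⁻¹' A)] 0 :=
      (lintegral_eq_zero_iff (by fun_prop)).1 hbzero
    rw [EventuallyEq, ae_restrict_iff' hpre] at h1
    filter_upwards [h1] with x hx hx0
    have : ENNReal.ofReal (h x) = 0 := hx (by exact hx0)
    rw [ENNReal.ofReal_eq_zero] at this
    exact le_antisymm this (hnonneg x)
  have := ae_comp_affine (p := β) (q := -v) hβ0 hae0
  filter_upwards [this] with y hy hy0
  have harg : (β * y + -v + v) / β = y := by field_simp; ring
  rw [harg] at hy
  have : h (β * y + -v) = 0 := hy hy0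
  rw [show Tmap β b y = β * y + -v by rw [Tmap]; ring]
  exact this

include hβ1 hm hmeas hnonneg hdens in
lemma ae_zero_Tword (w : List Bool) :
    ∀ᵐ x ∂(volume : Measure ℝ), h x = 0 → h (Tword β w x) = 0 := by
  have hβ0 : β ≠ 0 := ne_of_gt (beta_pos hβ1)
  induction w using List.reverseRecOn with
  | nil => exact ae_of_all _ fun x hx => by rwa [Tword_nil]
  | append_singleton w b ih =>
    have h2 : ∀ᵐ x ∂(volume : Measure ℝ),
        h (Tword β w x) = 0 → h (Tmap β b (Tword β w x)) = 0 := by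
      obtain ⟨c, hc⟩ := Tword_affine β w
      have := ae_comp_affine (p := β ^ w.length) (q := -c) (pow_ne_zero _ hβ0)
        (ae_zero_Tmap hβ1 hm hmeas hnonneg hdens b)
      filter_upwards [this] with y hy
      rw [hc y, sub_eq_add_neg]
      exact hy
    filter_upwards [ih, h2] with x hx1 hx2 hx0
    rw [Tword_append]
    exact hx2 (hx1 hx0)

end herit

/-- Assume `ν_β` is absolutely continuous with density `h_β`, and let
`m¹_x` be determined on cylinders by `m¹_x([a₁⋯a_n]) = (β/2)ⁿ h_β(T_{a₁⋯a_n}(x))/h_β(x)`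
(for `x` with `h_β(x) > 0`). Then for `ν_β`-a.e. `x` the measure `m¹_x` is a probability
measure supported on `E_β(x)`, the family `(m¹_x)` disintegrates `m` over `ν_β`, and
consequently `m¹_x` coincides `ν_β`-a.e. with any disintegration `(m_x)` of `m` by the
fibres `E_β(x)`. -/
theorem stmt2 (β : ℝ) (hβ : β ∈ Set.Ioo (1 : ℝ) 2)
    (m : Measure Sig) (hm : bernoulliCylProp m)
    (h : ℝ → ℝ) (hmeas : Measurable h) (hnonneg : ∀ x, 0 ≤ h x)
    (hsupp : ∀ x ∉ Ibeta β, h x = 0)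
    (hdens : Measure.map (piBeta β) m
      = volume.withDensity fun x => ENNReal.ofReal (h x))
    (m1 : ℝ → Measure Sig)
    (hm1 : ∀ x, 0 < h x → ∀ w : List Bool,
      m1 x (cyl w)
        = ENNReal.ofReal ((β / 2) ^ w.length * h (Tword β w x) / h x)) :
    IsDisintegration β m m1 ∧
    ∀ mx : ℝ → Measure Sig, IsDisintegration β m mx →
      ∀ᵐ x ∂Measure.map (piBeta β) m, mx x = m1 x := by
  obtain ⟨hβ1, hβ2⟩ := hβ
  have hβ0 : (0:ℝ) < β := beta_pos hβ1
  haveI hPm : IsProbabilityMeasure m := isProb_m hm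
  have hπ : Measurable (piBeta β) := measurable_piBeta hβ1
  set ν : Measure ℝ := Measure.map (piBeta β) m with hνdef
  haveI hPν : IsProbabilityMeasure ν := Measure.isProbabilityMeasure_map hπ.aemeasurable
  have haepos : ∀ᵐ x ∂ν, 0 < h x := ae_h_pos hmeas hnonneg hdens
  have hprob1 : ∀ x, 0 < h x → IsProbabilityMeasure (m1 x) := by
    intro x hx
    constructor
    rw [← cyl_nil, hm1 x hx []]
    simp [Tword_nil, div_self (ne_of_gt hx)]
  have hsupp1 : ∀ x, 0 < h x → m1 x (Ebeta β x)ᶜ = 0 := by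
    intro x hx
    have hsub : (Ebeta β x)ᶜ ⊆ ⋃ w ∈ {w : List Bool | Tword β w x ∉ Ibeta β}, cyl w := by
      intro a ha
      rw [Set.mem_compl_iff, Ebeta, Set.mem_preimage, Set.mem_singleton_iff] at ha
      have hnot : ¬ ∀ n, Tword β (pref a n) x ∈ Set.Icc (0:ℝ) (β - 1)⁻¹ := by
        intro hcon; exact ha (piBeta_eq_of_forall_mem hβ1 hcon)
      push_neg at hnot
      obtain ⟨n, hn⟩ := hnot
      exact Set.mem_biUnion (by exact hn) (mem_cyl_pref a n)
    refine measure_mono_null hsub ?_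
    rw [measure_biUnion_null_iff (Set.to_countable _)]
    intro w hw
    rw [hm1 x hx w, hsupp _ hw]
    simp
  classical
  set κf : ℝ → Measure Sig := fun x => if 0 < h x then m1 x else m with hκf
  have hκprob : ∀ x, IsProbabilityMeasure (κf x) := by
    intro x
    by_cases hx : 0 < h x
    · simp only [hκf, if_pos hx]; exact hprob1 x hx
    · simp only [hκf, if_neg hx]; exact hPm
  have hκcyl : ∀ (w : List Bool) x, κf x (cyl w)
      = if 0 < h x then ENNReal.ofReal ((β/2)^w.length * h (Tword β w x) / h x)
        else m (cyl w) := by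
    intro w x
    by_cases hx : 0 < h x
    · simp only [hκf, if_pos hx]; exact hm1 x hx w
    · simp only [hκf, if_neg hx]
  have hmeascyl : ∀ w : List Bool, Measurable (fun x => κf x (cyl w)) := by
    intro w
    have heq : (fun x => κf x (cyl w)) = fun x =>
        if 0 < h x then ENNReal.ofReal ((β/2)^w.length * h (Tword β w x) / h x)
        else m (cyl w) := funext fun x => hκcyl w x
    rw [heq]
    apply Measurable.ite (measurableSet_lt measurable_const hmeas)
    · exact ENNReal.measurable_ofReal.comp
        ((measurable_const.mul (hmeas.comp (measurable_Tword β w))).div hmeas)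
    · exact measurable_const
  have hmeasκf : Measurable κf := by
    apply Measure.measurable_of_measurable_coe
    have hall : ∀ t : Set Sig, MeasurableSet t → Measurable (fun x => κf x t) := by
      refine MeasurableSpace.induction_on_inter (C := fun t _ => Measurable fun x => κf x t)
        borel_eq_cyl isPiSystem_cyl ?_ ?_ ?_ ?_
      · simp only [measure_empty]; exact measurable_const
      · rintro t ⟨w, rfl⟩
        exact hmeascyl w
      · intro t htm ihc
        have hcmp : ∀ x, κf x tᶜ = 1 - κf x t := by
          intro x
          haveI := hκprob x
          rw [prob_compl_eq_one_sub htm]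
        simp only [hcmp]
        exact measurable_const.sub ihc
      · intro g hdisj hgm ihg
        have hun : ∀ x, κf x (⋃ i, g i) = ∑' i, κf x (g i) :=
          fun x => measure_iUnion hdisj hgm
        simp only [hun]
        exact Measurable.ennreal_tsum ihg
    exact fun s hs => hall s hs
  set κ : ProbabilityTheory.Kernel ℝ Sig := ⟨κf, hmeasκf⟩ with hκdef
  haveI : ProbabilityTheory.IsMarkovKernel κ := ⟨fun x => hκprob x⟩
  have hone : ∫⁻ x, ENNReal.ofReal (h x) ∂(volume : Measure ℝ) = 1 :=
    lintegral_H_one hβ1 hm hdens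
  have hkey : ∀ w : List Bool, ∫⁻ x, κf x (cyl w) ∂ν = 2⁻¹ ^ w.length := by
    intro w
    rw [hdens,
      lintegral_withDensity_eq_lintegral_mul volume (by fun_prop) (hmeascyl w)]
    have hae : (fun x => ((fun y => ENNReal.ofReal (h y)) * (fun x => κf x (cyl w))) x)
        =ᵐ[volume] (fun x => ENNReal.ofReal ((β/2)^w.length * h (Tword β w x))) := by
      filter_upwards [ae_zero_Tword hβ1 hm hmeas hnonneg hdens w] with x hx
      simp only [Pi.mul_apply]
      rw [hκcyl w x]
      by_cases hxp : 0 < h x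
      · rw [if_pos hxp, ← ENNReal.ofReal_mul (hnonneg x)]
        congr 1
        field_simp
      · rw [if_neg hxp]
        have hx0 : h x = 0 := le_antisymm (not_lt.1 hxp) (hnonneg x)
        rw [hx0, hx hx0]
        simp
    rw [lintegral_congr_ae hae]
    have hc : (0:ℝ) ≤ (β/2)^w.length := by positivity
    have hor : ∀ x : ℝ, ENNReal.ofReal ((β/2)^w.length * h (Tword β w x))
        = ENNReal.ofReal ((β/2)^w.length) * ENNReal.ofReal (h (Tword β w x)) := fun x =>
      ENNReal.ofReal_mul hc
    simp only [hor]
    have hmT : Measurable fun x : ℝ => ENNReal.ofReal (h (Tword β w x)) :=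
      (hmeas.comp (measurable_Tword β w)).ennreal_ofReal
    rw [lintegral_const_mul _ hmT]
    obtain ⟨c, hcw⟩ := Tword_affine β w
    have hchg : ∫⁻ x, ENNReal.ofReal (h (Tword β w x)) ∂volume
        = ENNReal.ofReal ((β ^ w.length)⁻¹) := by
      have hmap := map_affine_volume (p := β ^ w.length) (-c) (pow_ne_zero w.length (ne_of_gt hβ0))
      calc ∫⁻ x, ENNReal.ofReal (h (Tword β w x)) ∂volume
          = ∫⁻ x, ENNReal.ofReal (h (β ^ w.length * x + (-c))) ∂volume := by
            apply lintegral_congr; intro x; rw [hcw x, sub_eq_add_neg]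
        _ = ∫⁻ y, ENNReal.ofReal (h y)
              ∂(Measure.map (fun x => β ^ w.length * x + (-c)) volume) := by
            rw [lintegral_map (by fun_prop) (by fun_prop)]
        _ = ENNReal.ofReal |(β ^ w.length)⁻¹| * ∫⁻ y, ENNReal.ofReal (h y) ∂volume := by
            rw [hmap, lintegral_smul_measure, smul_eq_mul]
        _ = ENNReal.ofReal ((β ^ w.length)⁻¹) := by
            rw [hone, mul_one, abs_of_pos (by positivity)]
    rw [hchg, ← ENNReal.ofReal_mul hc]
    have hval : (β/2)^w.length * (β ^ w.length)⁻¹ = ((2:ℝ)⁻¹) ^ w.length := by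
      rw [div_pow, ← inv_pow]
      field_simp
      rw [← mul_pow, ← mul_pow, mul_one_div_cancel hβ0.ne']; norm_num
    rw [hval, ENNReal.ofReal_pow (by norm_num)]
    congr 1
    rw [ENNReal.ofReal_inv_of_pos (by norm_num : (0:ℝ) < 2)]
    norm_num
  -- the measure identity
  have hκapp : ∀ x, κ x = κf x := fun x => rfl
  have hsnd : m = (Measure.compProd ν κ).snd := by
    apply ext_of_generate_finite (Set.range cyl) borel_eq_cyl isPiSystem_cyl
    · rintro s ⟨w, rfl⟩
      rw [Measure.snd_apply (measurableSet_cyl w),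
        Measure.compProd_apply (measurable_snd (measurableSet_cyl w))]
      have hpre : ∀ x : ℝ, (Prod.mk x ⁻¹' (Prod.snd ⁻¹' cyl w)) = cyl w := fun x => rfl
      simp only [hpre, hκapp]
      rw [hm w]
      exact (hkey w).symm
    · rw [Measure.snd_apply MeasurableSet.univ]
      simp [measure_univ]
  -- the integral identity
  have hint : ∀ f : Sig → ℝ, Integrable f m →
      ∫ a, f a ∂m = ∫ x, ∫ a, f a ∂(κf x) ∂ν := by
    intro f hf
    have hsndmap : (Measure.compProd ν κ).snd = Measure.map Prod.snd (Measure.compProd ν κ) := rfl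
    have hf' : Integrable f (Measure.map Prod.snd (Measure.compProd ν κ)) := by
      rw [← hsndmap, ← hsnd]; exact hf
    have hfP : Integrable (fun z : ℝ × Sig => f z.2) (Measure.compProd ν κ) :=
      (integrable_map_measure hf'.1 measurable_snd.aemeasurable).1 hf'
    calc ∫ a, f a ∂m = ∫ a, f a ∂(Measure.map Prod.snd (Measure.compProd ν κ)) := by
          rw [← hsndmap, ← hsnd]
      _ = ∫ z, f z.2 ∂(Measure.compProd ν κ) := integral_map measurable_snd.aemeasurable hf'.1
      _ = ∫ x, ∫ y, f y ∂(κ x) ∂ν := Measure.integral_compProd hfP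
      _ = ∫ x, ∫ a, f a ∂(κf x) ∂ν := by simp only [hκapp]
  have hdis1 : IsDisintegration β m m1 := by
    constructor
    · filter_upwards [haepos] with x hx
      exact ⟨hprob1 x hx, hsupp1 x hx⟩
    · intro f hf
      rw [hint f hf]
      apply integral_congr_ae
      filter_upwards [haepos] with x hx
      simp only [hκf, if_pos hx]
  refine ⟨hdis1, ?_⟩
  intro mx hmx
  have key : ∀ (mz : ℝ → Measure Sig), IsDisintegration β m mz →
      ∀ (w : List Bool) (B : Set ℝ), MeasurableSet B →
      ∫ x, Set.indicator B (fun y => (mz y (cyl w)).toReal) x ∂ν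
        = (m (cyl w ∩ piBeta β ⁻¹' B)).toReal := by
    intro mz hmz w B hB
    obtain ⟨hz1, hz2⟩ := hmz
    rw [← hνdef] at hz1
    set S : Set Sig := cyl w ∩ piBeta β ⁻¹' B with hSdef
    have hSmeas : MeasurableSet S := (measurableSet_cyl w).inter (hπ hB)
    have hfInt : Integrable (S.indicator fun _ => (1:ℝ)) m :=
      (integrable_const (1:ℝ)).indicator hSmeas
    have h1 := hz2 _ hfInt
    rw [← hνdef] at h1
    have hLHS : ∫ a, S.indicator (fun _ => (1:ℝ)) a ∂m = (m S).toReal := by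
      rw [integral_indicator_const _ hSmeas, smul_eq_mul, mul_one, measureReal_def]
    have h2 : ∀ᵐ x ∂ν, (∫ a, S.indicator (fun _ => (1:ℝ)) a ∂(mz x))
        = Set.indicator B (fun y => (mz y (cyl w)).toReal) x := by
      filter_upwards [hz1] with x hx
      obtain ⟨hxp, hxs⟩ := hx
      rw [integral_indicator_const _ hSmeas, smul_eq_mul, mul_one, measureReal_def]
      by_cases hxB : x ∈ B
      · rw [Set.indicator_of_mem hxB]
        congr 1
        calc mz x S = mz x (S ∩ Ebeta β x) := (measure_inter_conull hxs).symm
          _ = mz x (cyl w ∩ Ebeta β x) := by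
              congr 1
              ext a
              constructor
              · rintro ⟨⟨h1', _⟩, h3'⟩; exact ⟨h1', h3'⟩
              · rintro ⟨h1', h3'⟩
                have hπa : piBeta β a = x := h3'
                refine ⟨⟨h1', ?_⟩, h3'⟩
                rw [Set.mem_preimage, hπa]
                exact hxB
          _ = mz x (cyl w) := measure_inter_conull hxs
      · rw [Set.indicator_of_notMem hxB]
        have hz0 : mz x S = 0 := by
          refine measure_mono_null (fun a ha => ?_) hxs
          rw [Set.mem_compl_iff]
          intro haE
          have hπa : piBeta β a = x := haE
          apply hxB
          rw [← hπa]
          exact ha.2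
        rw [hz0]
        simp
    rw [hLHS, integral_congr_ae h2] at h1
    exact h1.symm
  have keyF := key mx hmx
  have keyG' := key m1 hdis1
  have hGm : ∀ w : List Bool, Measurable (fun x => (κf x (cyl w)).toReal) :=
    fun w => (hmeascyl w).ennreal_toReal
  have hGae : ∀ w : List Bool,
      (fun x => (m1 x (cyl w)).toReal) =ᵐ[ν] (fun x => (κf x (cyl w)).toReal) := by
    intro w
    filter_upwards [haepos] with x hx
    simp only [hκf, if_pos hx]
  have keyG : ∀ (w : List Bool) (B : Set ℝ), MeasurableSet B →
      ∫ x, Set.indicator B (fun y => (κf y (cyl w)).toReal) x ∂ν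
        = (m (cyl w ∩ piBeta β ⁻¹' B)).toReal := by
    intro w B hB
    rw [← keyG' w B hB]
    apply integral_congr_ae
    filter_upwards [hGae w] with x hx
    by_cases hxB : x ∈ B <;> simp [Set.indicator_apply, hxB, hx]
  have hmain : ∀ w : List Bool,
      ∀ᵐ x ∂ν, (mx x (cyl w)).toReal = (κf x (cyl w)).toReal := by
    intro w
    have hFint : Integrable (fun x => (mx x (cyl w)).toReal) ν := by
      by_contra hni
      have hz := integral_undef hni
      have h2 := keyF w Set.univ MeasurableSet.univ
      rw [Set.indicator_univ, Set.preimage_univ, Set.inter_univ, hm w, hz] at h2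
      have hpos : (((2:ℝ≥0∞))⁻¹ ^ w.length).toReal = ((2:ℝ)⁻¹) ^ w.length := by
        rw [ENNReal.toReal_pow]
        norm_num
      rw [hpos] at h2
      have : (0:ℝ) < ((2:ℝ)⁻¹) ^ w.length := by positivity
      rw [← h2] at this
      exact lt_irrefl _ this
    have hGint : Integrable (fun x => (κf x (cyl w)).toReal) ν := by
      apply Integrable.mono' (integrable_const (1:ℝ)) (hGm w).aestronglyMeasurable
      apply ae_of_all
      intro x
      rw [Real.norm_eq_abs, abs_of_nonneg ENNReal.toReal_nonneg]
      haveI := hκprob x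
      calc (κf x (cyl w)).toReal ≤ (1 : ℝ≥0∞).toReal :=
            ENNReal.toReal_mono ENNReal.one_ne_top prob_le_one
        _ = 1 := by simp
    apply ae_eq_of_forall_setIntegral_eq_of_sigmaFinite
      (fun s _ _ => hFint.integrableOn) (fun s _ _ => hGint.integrableOn)
    intro s hs _
    rw [← integral_indicator hs, ← integral_indicator hs, keyF w s hs, keyG w s hs]
  have hmainAll : ∀ᵐ x ∂ν, ∀ w : List Bool, (mx x (cyl w)).toReal = (κf x (cyl w)).toReal :=
    ae_all_iff.2 hmain
  obtain ⟨hmx1, hmx2⟩ := hmx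
  rw [← hνdef] at hmx1
  filter_upwards [hmainAll, haepos, hmx1] with x hxw hxp hxP
  haveI : IsProbabilityMeasure (mx x) := hxP.1
  haveI : IsProbabilityMeasure (m1 x) := hprob1 x hxp
  apply ext_of_generate_finite (Set.range cyl) borel_eq_cyl isPiSystem_cyl
  · rintro s ⟨w, rfl⟩
    have hxf : κf x = m1 x := by simp only [hκf, if_pos hxp]
    have := hxw w
    rw [hxf] at this
    exact (ENNReal.toReal_eq_toReal_iff' (measure_ne_top _ _) (measure_ne_top _ _)).1 this
  · simp [measure_univ]
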